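/- Fix an integer m ≥ 1 and write (1)_j = (1,…,1,0,…,0) for the tuple with j ones (of length m in the argument of r, and of length m−1 in the basis indices). Then in F one has the identity Σ_{j=0}^{m} (−1)^{j−1} r((1)_j, (0,−j)) = Σ_{j=1}^{m} (−1)^{j−1} e_{((1)_{j−1}, −j, 1)}. (This expresses that (Σ_j (−1)^j Λ^j p̃_+^{[ev]}) ⊗ τ_{0,−1,1} lies in the image Res(K⁰(K)) of the restriction map for G = SU(m,2).) -/

import Mathlib

open scoped Classical

set_option maxHeartbeats 1000000

/-- `ℤ^k_+`: weakly decreasing integer tuples of length `k`. -/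
abbrev ZP (k : ℕ) : Type := {μ : Fin k → ℤ // ∀ i j : Fin k, i ≤ j → μ j ≤ μ i}

/-- The free `ℤ`-module `F = K⁰(K_M)` on the basis `ℤ^{m−1}_+ × ℤ × ℤ` for
`G = SU(m,2)` (here `m = m0 + 1`, so the first components have length `m0`). -/
abbrev FSU2 (m0 : ℕ) : Type := (ZP m0 × ℤ × ℤ) →₀ ℤ

/-- The restriction element
`r(λ',λ'') = Σ_{μ'⊆λ'} Σ_{λ''_1 ≥ μ'' ≥ λ''_2} e_{(μ', μ'', |λ'|+|λ''|−|μ'|−μ'')}`,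
the class of `π_{λ',λ''}|_{K_M}`. -/
noncomputable def rSU2 (m0 : ℕ) (l : Fin (m0 + 1) → ℤ) (d e : ℤ) : FSU2 m0 :=
  ∑ μ ∈ Finset.Icc (fun i : Fin m0 => l i.succ) (fun i : Fin m0 => l i.castSucc),
    ∑ q ∈ Finset.Icc e d,
      if h : ∀ i j : Fin m0, i ≤ j → μ j ≤ μ i then
        Finsupp.single ((⟨μ, h⟩ : ZP m0), q, ((∑ i, l i) + d + e) - (∑ i, μ i) - q) 1
      else 0

/-- The tuple `(1)_j = (1, …, 1, 0, …, 0)` with `j` ones. -/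
def onesTuple (k j : ℕ) : Fin k → ℤ := fun i => if (i : ℕ) < j then 1 else 0

lemma onesTuple_anti (k a : ℕ) : ∀ i j : Fin k, i ≤ j → onesTuple k a j ≤ onesTuple k a i := by
  intro i j hij
  have h : (i : ℕ) ≤ j := hij
  simp only [onesTuple]
  split_ifs <;> omega

lemma sum_onesTuple (k a : ℕ) : (∑ i : Fin k, onesTuple k a i) = ((min a k : ℕ) : ℤ) := by
  induction k with
  | zero => simp
  | succ n ih =>
    rw [Fin.sum_univ_castSucc]
    have h1 : (∑ i : Fin n, onesTuple (n+1) a i.castSucc) = ∑ i : Fin n, onesTuple n a i := by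
      apply Finset.sum_congr rfl
      intro i _
      simp [onesTuple]
    rw [h1, ih]
    simp only [onesTuple, Fin.val_last]
    split_ifs <;> push_cast <;> omega

noncomputable def ESU (m0 a : ℕ) (q : ℤ) : FSU2 m0 :=
  Finsupp.single ((⟨onesTuple m0 a, onesTuple_anti m0 a⟩ : ZP m0), q, -(a : ℤ) - q) 1

lemma onesTuple_succ (m0 j : ℕ) :
    (fun i : Fin m0 => onesTuple (m0+1) j i.succ) = onesTuple m0 (j-1) := by
  funext i
  simp only [onesTuple, Fin.val_succ]
  split_ifs <;> omega

lemma onesTuple_castSucc (m0 j : ℕ) :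
    (fun i : Fin m0 => onesTuple (m0+1) j i.castSucc) = onesTuple m0 j := by
  funext i
  simp only [onesTuple, Fin.coe_castSucc]

lemma onesTuple_top (m0 : ℕ) : onesTuple m0 (m0+1) = onesTuple m0 m0 := by
  funext i
  simp only [onesTuple]
  have := i.isLt
  split_ifs <;> omega

lemma onesTuple_ne (m0 a : ℕ) (ha : a < m0) : onesTuple m0 a ≠ onesTuple m0 (a+1) := by
  intro h
  have := congrFun h ⟨a, ha⟩
  simp [onesTuple] at this

lemma Icc_onesTuple_pair (m0 a : ℕ) (ha : a < m0) :
    Finset.Icc (onesTuple m0 a) (onesTuple m0 (a+1)) =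
      {onesTuple m0 a, onesTuple m0 (a+1)} := by
  ext μ
  simp only [Finset.mem_Icc, Finset.mem_insert, Finset.mem_singleton, Pi.le_def]
  constructor
  · rintro ⟨h1, h2⟩
    by_cases hv : μ ⟨a, ha⟩ ≤ 0
    · left
      funext i
      by_cases hi : (i : ℕ) = a
      · have hie : i = ⟨a, ha⟩ := Fin.ext hi
        subst hie
        have l1 := h1 ⟨a, ha⟩
        simp only [onesTuple] at l1 ⊢
        split_ifs at l1 ⊢ <;> omega
      · have l1 := h1 i
        have l2 := h2 i
        simp only [onesTuple] at l1 l2 ⊢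
        split_ifs at l1 l2 ⊢ <;> omega
    · right
      funext i
      by_cases hi : (i : ℕ) = a
      · have hie : i = ⟨a, ha⟩ := Fin.ext hi
        subst hie
        have l2 := h2 ⟨a, ha⟩
        simp only [onesTuple] at l2 ⊢
        split_ifs at l2 ⊢ <;> omega
      · have l1 := h1 i
        have l2 := h2 i
        simp only [onesTuple] at l1 l2 ⊢
        split_ifs at l1 l2 ⊢ <;> omega
  · rintro (rfl | rfl) <;>
      exact ⟨fun i => by simp only [onesTuple]; split_ifs <;> omega,
             fun i => by simp only [onesTuple]; split_ifs <;> omega⟩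

lemma rsu2_inner (m0 j a : ℕ) (hj : j ≤ m0 + 1) (ha : a ≤ m0) :
    (∑ q ∈ Finset.Icc (-(j:ℤ)) 0,
      if h : ∀ i k : Fin m0, i ≤ k → onesTuple m0 a k ≤ onesTuple m0 a i then
        Finsupp.single ((⟨onesTuple m0 a, h⟩ : ZP m0), q,
          ((∑ i, onesTuple (m0+1) j i) + 0 + (-(j:ℤ))) - (∑ i, onesTuple m0 a i) - q) 1
      else 0)
    = ∑ q ∈ Finset.Icc (-(j:ℤ)) 0, ESU m0 a q := by
  apply Finset.sum_congr rfl
  intro q _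
  rw [dif_pos (onesTuple_anti m0 a)]
  unfold ESU
  congr 1
  rw [Prod.ext_iff, Prod.ext_iff]
  refine ⟨rfl, rfl, ?_⟩
  rw [sum_onesTuple, sum_onesTuple]
  have h1 : min j (m0+1) = j := by omega
  have h2 : min a m0 = a := by omega
  rw [h1, h2]
  ring

lemma rSU2_closed (m0 j : ℕ) (hj : j ≤ m0 + 1) :
    rSU2 m0 (onesTuple (m0+1) j) 0 (-(j:ℤ)) =
      (if 1 ≤ j then ∑ q ∈ Finset.Icc (-(j:ℤ)) 0, ESU m0 (j-1) q else 0)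
    + (if j ≤ m0 then ∑ q ∈ Finset.Icc (-(j:ℤ)) 0, ESU m0 j q else 0) := by
  unfold rSU2
  rw [onesTuple_succ, onesTuple_castSucc]
  rcases Nat.eq_zero_or_pos j with rfl | hj1
  · simp only [Nat.zero_sub, Finset.Icc_self, Finset.sum_singleton]
    rw [if_neg (by omega), if_pos (by omega), zero_add]
    exact rsu2_inner m0 0 0 (by omega) (by omega)
  · rcases Nat.lt_or_ge j (m0+1) with hj2 | hj2
    · obtain ⟨a, rfl⟩ : ∃ a, j = a + 1 := ⟨j - 1, by omega⟩
      rw [if_pos (show 1 ≤ a + 1 by omega), if_pos (show a + 1 ≤ m0 by omega)]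
      rw [Nat.add_sub_cancel]
      rw [Icc_onesTuple_pair m0 a (by omega)]
      rw [Finset.sum_pair (onesTuple_ne m0 a (by omega))]
      congr 1
      · exact rsu2_inner m0 (a+1) a hj (by omega)
      · exact rsu2_inner m0 (a+1) (a+1) hj (by omega)
    · have hje : j = m0 + 1 := by omega
      subst hje
      rw [if_pos (show 1 ≤ m0 + 1 by omega), if_neg (by omega)]
      rw [onesTuple_top, Nat.add_sub_cancel, Finset.Icc_self, Finset.sum_singleton]
      rw [rsu2_inner m0 (m0+1) m0 (by omega) (by omega), add_zero]

lemma sumG_split (m0 a : ℕ) :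
    (∑ q ∈ Finset.Icc (-((a:ℤ)+1)) 0, ESU m0 a q)
      = ESU m0 a (-((a:ℤ)+1)) + ∑ q ∈ Finset.Icc (-(a:ℤ)) 0, ESU m0 a q := by
  have h : Finset.Icc (-((a:ℤ)+1)) 0 = insert (-((a:ℤ)+1)) (Finset.Icc (-(a:ℤ)) 0) := by
    ext x
    simp only [Finset.mem_Icc, Finset.mem_insert]
    omega
  rw [h, Finset.sum_insert (by simp only [Finset.mem_Icc]; omega)]

/-- For `G = SU(m,2)` (with `m = m0 + 1 ≥ 1`) one has the identity
`Σ_{j=0}^{m} (−1)^{j−1} r((1)_j, (0,−j)) = Σ_{j=1}^{m} (−1)^{j−1} e_{((1)_{j−1}, −j, 1)}`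
in `F`; this expresses that `(Σ_j (−1)^j Λ^j p̃₊^{[ev]}) ⊗ τ_{0,−1,1}` lies in the
image of the restriction map. -/
theorem exterior_power_ansatz_identity (m0 : ℕ) :
    ∑ j ∈ Finset.range (m0 + 2),
        (-1 : ℤ) ^ (j + 1) • rSU2 m0 (onesTuple (m0 + 1) j) 0 (-(j : ℤ))
      = ∑ j ∈ Finset.Icc 1 (m0 + 1),
          (-1 : ℤ) ^ (j + 1) •
            Finsupp.single
              ((⟨onesTuple m0 (j - 1), fun a b hab => by
                  have hab' : (a : ℕ) ≤ (b : ℕ) := hab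
                  simp only [onesTuple]
                  split_ifs <;> omega⟩ : ZP m0), -(j : ℤ), 1) 1 := by
  have key : ∀ j ∈ Finset.range (m0+2),
      (-1:ℤ)^(j+1) • rSU2 m0 (onesTuple (m0+1) j) 0 (-(j:ℤ))
      = (-1:ℤ)^(j+1) • (if 1 ≤ j then ∑ q ∈ Finset.Icc (-(j:ℤ)) 0, ESU m0 (j-1) q else 0)
      + (-1:ℤ)^(j+1) • (if j ≤ m0 then ∑ q ∈ Finset.Icc (-(j:ℤ)) 0, ESU m0 j q else 0) := by
    intro j hj
    have hj' : j ≤ m0 + 1 := by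
      have := Finset.mem_range.mp hj
      omega
    rw [rSU2_closed m0 j hj', smul_add]
  rw [Finset.sum_congr rfl key, Finset.sum_add_distrib]
  have h1 : (∑ j ∈ Finset.range (m0+2),
        (-1:ℤ)^(j+1) • (if 1 ≤ j then ∑ q ∈ Finset.Icc (-(j:ℤ)) 0, ESU m0 (j-1) q else 0))
      = ∑ i ∈ Finset.range (m0+1),
          (-1:ℤ)^i • (∑ q ∈ Finset.Icc (-((i:ℤ)+1)) 0, ESU m0 i q) := by
    rw [Finset.sum_range_succ' _ (m0+1)]
    rw [if_neg (by omega), smul_zero, add_zero]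
    apply Finset.sum_congr rfl
    intro i _
    rw [if_pos (by omega), Nat.add_sub_cancel]
    have hsgn : (-1:ℤ)^(i+1+1) = (-1:ℤ)^i := by
      rw [pow_succ, pow_succ]; ring
    rw [hsgn]
    have hc : (-(((i+1:ℕ)):ℤ)) = -((i:ℤ)+1) := by push_cast; ring
    rw [hc]
  have h2 : (∑ j ∈ Finset.range (m0+2),
        (-1:ℤ)^(j+1) • (if j ≤ m0 then ∑ q ∈ Finset.Icc (-(j:ℤ)) 0, ESU m0 j q else 0))
      = ∑ i ∈ Finset.range (m0+1),
          (-1:ℤ)^(i+1) • (∑ q ∈ Finset.Icc (-(i:ℤ)) 0, ESU m0 i q) := by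
    rw [Finset.sum_range_succ]
    rw [if_neg (by omega), smul_zero, add_zero]
    apply Finset.sum_congr rfl
    intro i hi
    rw [if_pos (by have := Finset.mem_range.mp hi; omega)]
  rw [h1, h2, ← Finset.sum_add_distrib]
  have h3 : ∀ i ∈ Finset.range (m0+1),
      ((-1:ℤ)^i • (∑ q ∈ Finset.Icc (-((i:ℤ)+1)) 0, ESU m0 i q)
        + (-1:ℤ)^(i+1) • (∑ q ∈ Finset.Icc (-(i:ℤ)) 0, ESU m0 i q))
      = (-1:ℤ)^i • ESU m0 i (-((i:ℤ)+1)) := by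
    intro i _
    rw [sumG_split, smul_add]
    have hsgn : (-1:ℤ)^(i+1) = -(-1:ℤ)^i := by rw [pow_succ]; ring
    rw [hsgn, neg_smul]
    abel
  rw [Finset.sum_congr rfl h3]
  rw [← Finset.Ico_add_one_right_eq_Icc, Finset.sum_Ico_eq_sum_range]
  have hcard : m0 + 1 + 1 - 1 = m0 + 1 := by omega
  rw [hcard]
  apply Finset.sum_congr rfl
  intro i _
  have hsgn : (-1:ℤ)^(1+i+1) = (-1:ℤ)^i := by
    rw [pow_succ, pow_add]; ring
  rw [hsgn]
  have hix : 1 + i - 1 = i := by omega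
  congr 1
  unfold ESU
  congr 1
  rw [Prod.ext_iff, Prod.ext_iff]
  refine ⟨Subtype.ext ?_, ?_, ?_⟩
  · show onesTuple m0 i = onesTuple m0 (1 + i - 1)
    rw [hix]
  · show -((i:ℤ)+1) = -(((1+i:ℕ)):ℤ)
    push_cast
    ring
  · show -(i:ℤ) - -((i:ℤ)+1) = 1
    ring
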